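/- Let Π be a CNF theory, M a model of Π, and S the steady set of M for Π. Then no clause of the form h ← ∅ (a fact, single atom head and empty body) occurs in the simplified theory (simpl(Π,M))_{M\S}. -/
import Mathlib


structure Clause where
  head : Finset ℕ
  body : Finset ℕ
deriving DecidableEq

abbrev Theory := Finset Clause

/-- interpretation I satisfies clause c -/
def satC (I : Finset ℕ) (c : Clause) : Prop :=
  (c.head ∩ I).Nonempty ∨ ¬ c.body ⊆ I

def isModel (T : Theory) (I : Finset ℕ) : Prop := ∀ c ∈ T, satC I c

def isMinModel (T : Theory) (I : Finset ℕ) : Prop :=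
  isModel T I ∧ ∀ J ⊂ I, ¬ isModel T J

def Positive (T : Theory) : Prop := ∀ c ∈ T, c.head.Nonempty

def Horn (T : Theory) : Prop := ∀ c ∈ T, c.head.card = 1

/-- atoms occurring in a theory -/
def atoms (T : Theory) : Finset ℕ := T.biUnion (fun c => c.head ∪ c.body)

/-- c_{X←} : project head on X -/
def projHeadC (c : Clause) (X : Finset ℕ) : Clause := ⟨c.head ∩ X, c.body⟩
/-- c_X : project head and body on X -/
def projC (c : Clause) (X : Finset ℕ) : Clause := ⟨c.head ∩ X, c.body ∩ X⟩

/-- Π_{X←} -/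
def projHeadT (T : Theory) (X : Finset ℕ) : Theory :=
  (T.image (fun c => projHeadC c X)).filter (fun c => c.head.Nonempty)

/-- Π_X -/
def projT (T : Theory) (X : Finset ℕ) : Theory :=
  (T.image (fun c => projC c X)).filter (fun c => c.head.Nonempty)

/-- Π^{nd} : single-head fragment -/
def nd (T : Theory) : Theory := T.filter (fun c => c.head.card = 1)

/-- the steady set of M for Π is the minimal model of Π^{nd}_{M←} -/
def isSteady (T : Theory) (M S : Finset ℕ) : Prop :=
  isMinModel (nd (projHeadT T M)) S

def simpl (T : Theory) (M S : Finset ℕ) : Theory :=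
  T.filter (fun c => c.head ∩ S = ∅ ∧ c.body ⊆ M)

/-- simplified theory of Π w.r.t. M (with steady set S) -/
def simplT (T : Theory) (M S : Finset ℕ) : Theory := projT (simpl T M S) (M \ S)

/-- E erasable in M for T -/
def Erasable (T : Theory) (M E : Finset ℕ) : Prop :=
  E.Nonempty ∧ E ⊆ M ∧ isModel T (M \ E)

def Outbound (T : Theory) (Y Z : Finset ℕ) : Prop :=
  ∃ c ∈ T, (c.head ∩ Z).Nonempty ∧ (c.body ∩ (Y \ Z)).Nonempty ∧
    c.body ∩ Z = ∅ ∧ c.head ∩ (Y \ Z) = ∅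

def Elementary (T : Theory) (Y : Finset ℕ) : Prop :=
  Y.Nonempty ∧ Y ⊆ atoms T ∧ ∀ Z, Z ⊂ Y → Z.Nonempty → Outbound T Y Z

def HEF (T : Theory) : Prop :=
  ∀ c ∈ T, ∀ E, Elementary T E → (E ∩ c.head).card ≤ 1

def DisjunctiveSet (T : Theory) (S : Finset ℕ) : Prop :=
  ∃ c ∈ T, 1 < (c.head ∩ S).card

def SuperElementary (T : Theory) (X : Finset ℕ) : Prop :=
  Elementary T X ∧ ¬ Outbound T (atoms T) X

def posForm (T : Theory) (phi : ℕ) : Theory :=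
  T.filter (fun c => c.head.Nonempty) ∪
  (T.filter (fun c => c.head = ∅)).image (fun c => ⟨{phi}, c.body⟩) ∪
  (atoms T).image (fun a => ⟨{a}, {phi}⟩)

theorem stmt5 (T : Theory) (M S : Finset ℕ) (hM : isModel T M) (hS : isSteady T M S) :
    ∀ c ∈ simplT T M S, ¬ (c.head.card = 1 ∧ c.body = ∅) := by
  rintro c hc ⟨hcard, hbody⟩
  simp only [simplT, projT, Finset.mem_filter, Finset.mem_image] at hc
  obtain ⟨⟨c0, hc0, rfl⟩, hne⟩ := hc
  simp only [simpl, Finset.mem_filter] at hc0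
  obtain ⟨hc0T, hS0, hbM⟩ := hc0
  simp only [projC] at hcard hbody hne
  -- c0.head ∩ M = c0.head ∩ (M \ S)
  have hhead : c0.head ∩ M = c0.head ∩ (M \ S) := by
    ext x
    simp only [Finset.mem_inter, Finset.mem_sdiff]
    constructor
    · rintro ⟨hx, hxM⟩
      refine ⟨hx, hxM, fun hxS => ?_⟩
      have : x ∈ c0.head ∩ S := Finset.mem_inter.mpr ⟨hx, hxS⟩
      rw [hS0] at this; exact absurd this (Finset.notMem_empty x)
    · rintro ⟨hx, hxM, _⟩; exact ⟨hx, hxM⟩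
  -- the clause ⟨c0.head ∩ M, c0.body⟩ is in nd (projHeadT T M)
  have hmem : (⟨c0.head ∩ M, c0.body⟩ : Clause) ∈ nd (projHeadT T M) := by
    simp only [nd, projHeadT, Finset.mem_filter, Finset.mem_image]
    refine ⟨⟨⟨c0, hc0T, rfl⟩, ?_⟩, ?_⟩
    · rw [hhead]; exact Finset.card_pos.mp (by rw [hcard] at *; omega)
    · show (c0.head ∩ M).card = 1
      rw [hhead]; exact hcard
  have hsat := hS.1 _ hmem
  rcases hsat with h | h
  · simp only [satC] at h ⊢
    obtain ⟨x, hx⟩ := h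
    simp only [Finset.mem_inter] at hx
    have : x ∈ c0.head ∩ S := Finset.mem_inter.mpr ⟨hx.1.1, hx.2⟩
    rw [hS0] at this; exact absurd this (Finset.notMem_empty x)
  · apply h
    intro x hx
    have hxM : x ∈ M := hbM hx
    by_contra hxS
    have : x ∈ c0.body ∩ (M \ S) :=
      Finset.mem_inter.mpr ⟨hx, Finset.mem_sdiff.mpr ⟨hxM, hxS⟩⟩
    rw [hbody] at this; exact absurd this (Finset.notMem_empty x)
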